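/- If x ∈ C_n(q,d,m,r) with d ≥ 2, m = w_{n+1}, 0 ≤ r < m, and x′ is obtained from x by deleting c ≤ d symbols, then the index I = M(x) − M(x′) is uniquely determined by M(x′), r, and m: I = r + m − M(x′) if M(x′) > r, and I = r − M(x′) if M(x′) ≤ r. -/

import Mathlib

/-- Weight sequence: `W p d i` = w_i(q,d) where p = q-1; w_i = 0 for i ≤ 0 (encoded by
ℕ truncated subtraction together with `W p d 0 = 0`), and w_i = 1 + p·∑_{j=1}^d w_{i-j}
for i ≥ 1. -/
def W (p d : ℕ) : ℕ → ℕ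
  | 0 => 0
  | (i+1) => 1 + p * ∑ j ∈ Finset.range d, W p d (i - j)
decreasing_by exact Nat.lt_succ_of_le (Nat.sub_le i j)

/-- Moment of a word (1-indexed): M(x) = ∑_{i=1}^{n} w_i x_i. -/
def moment (w : ℕ → ℕ) (x : List ℕ) : ℕ :=
  ∑ i ∈ Finset.range x.length, w (i + 1) * x.getD i 0

/-- Deleted word x^{(D)}: delete the symbols at the (1-indexed) positions in D,
keeping the remaining symbols in order. -/
def deleteD (x : List ℕ) (D : Finset ℕ) : List ℕ :=
  ((List.range x.length).filter (fun i => (i + 1) ∉ D)).map (fun i => x.getD i 0)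

lemma W_zero (p d : ℕ) : W p d 0 = 0 := by rw [W]

lemma W_succ (p d i : ℕ) : W p d (i+1) = 1 + p * ∑ j ∈ Finset.range d, W p d (i - j) := by
  rw [W]

lemma W_one_le (p d i : ℕ) (hi : 1 ≤ i) : 1 ≤ W p d i := by
  obtain ⟨k, rfl⟩ := Nat.exists_eq_add_of_le hi
  rw [Nat.add_comm, W_succ]; omega

lemma W_le_succ (p d : ℕ) : ∀ i, W p d i ≤ W p d (i+1) := by
  intro i
  induction i using Nat.strong_induction_on with
  | _ i ih =>
    match i with
    | 0 => simp [W_zero]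
    | Nat.succ i =>
      rw [W_succ, W_succ]
      have h : ∑ j ∈ Finset.range d, W p d (i - j) ≤
          ∑ j ∈ Finset.range d, W p d (i + 1 - j) := by
        apply Finset.sum_le_sum
        intro j _
        rcases le_or_gt j i with hj | hj
        · have : i + 1 - j = (i - j) + 1 := by omega
          rw [this]
          exact ih (i - j) (by omega)
        · have h1 : i - j = 0 := by omega
          rw [h1, W_zero]; exact Nat.zero_le _
      have := Nat.mul_le_mul_left p h
      omega

lemma W_mono (p d : ℕ) : Monotone (W p d) := monotone_nat_of_le_succ (W_le_succ p d)

/-- reindexing: ∑_{k∈[s,t)} w(k+1) = ∑_{j<t-s} w(t-j) -/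
lemma sum_Ico_rev (w : ℕ → ℕ) (s t : ℕ) (hst : s ≤ t) :
    ∑ k ∈ Finset.Ico s t, w (k+1) = ∑ j ∈ Finset.range (t - s), w (t - j) := by
  rw [Finset.sum_Ico_eq_sum_range, ← Finset.sum_range_reflect]
  apply Finset.sum_congr rfl
  intro j hj
  simp only [Finset.mem_range] at hj
  congr 1
  omega

lemma Wsum_split (p d m : ℕ) :
    ∑ k ∈ Finset.range m, W p d (k+1) =
      ∑ j ∈ Finset.range d, W p d (m - j) + ∑ k ∈ Finset.range (m - d), W p d (k+1) := by
  set t := min d m with ht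
  have h1 : ∑ j ∈ Finset.range d, W p d (m - j) = ∑ j ∈ Finset.range t, W p d (m - j) := by
    symm
    apply Finset.sum_subset (Finset.range_subset_range.2 (by omega))
    intro j hj hj'
    simp only [Finset.mem_range] at hj hj'
    have : m - j = 0 := by omega
    rw [this, W_zero]
  have h2 : ∑ j ∈ Finset.range t, W p d (m - j) = ∑ k ∈ Finset.Ico (m - t) m, W p d (k+1) := by
    rw [sum_Ico_rev _ _ _ (Nat.sub_le m t), Nat.sub_sub_self (by omega : t ≤ m)]
  have h3 : ∑ k ∈ Finset.range (m - d), W p d (k+1) + ∑ k ∈ Finset.Ico (m - t) m, W p d (k+1)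
      = ∑ k ∈ Finset.range m, W p d (k+1) := by
    have hmt : m - d = m - t := by omega
    rw [hmt]; simp only [Finset.range_eq_Ico]
    exact Finset.sum_Ico_consecutive _ (Nat.zero_le _) (Nat.sub_le m t)
  omega

lemma Skey (p d m : ℕ) :
    p * ∑ k ∈ Finset.range m, W p d (k+1) + 1
      = W p d (m+1) + p * ∑ k ∈ Finset.range (m - d), W p d (k+1) := by
  rw [W_succ, Wsum_split p d m, Nat.mul_add]
  ring

lemma W_two_step (p d m : ℕ) (hp : 1 ≤ p) (hd : 2 ≤ d) :
    W p d (m+1) + W p d m + 1 ≤ W p d (m+2) := by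
  rw [W_succ p d (m+1)]
  have hsub : ({0, 1} : Finset ℕ) ⊆ Finset.range d := by
    intro j hj
    simp only [Finset.mem_insert, Finset.mem_singleton] at hj
    simp only [Finset.mem_range]
    omega
  have h1 : ∑ j ∈ ({0, 1} : Finset ℕ), W p d (m + 1 - j) ≤
      ∑ j ∈ Finset.range d, W p d (m + 1 - j) := Finset.sum_le_sum_of_subset hsub
  rw [Finset.sum_pair (by norm_num)] at h1
  simp only [Nat.sub_zero, Nat.add_sub_cancel] at h1
  have h2 : W p d (m+1) + W p d m ≤ p * ∑ j ∈ Finset.range d, W p d (m + 1 - j) :=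
    le_trans (le_trans h1 (Nat.le_mul_of_pos_left _ (by omega))) (le_refl _)
  omega

lemma pS_lt (p d : ℕ) (hp : 1 ≤ p) (hd : 2 ≤ d) :
    ∀ m, p * ∑ k ∈ Finset.range m, W p d (k+1) < W p d (m+2) := by
  intro m
  induction m using Nat.strong_induction_on with
  | _ m ih =>
    rcases Nat.eq_zero_or_pos m with rfl | hm
    · simp; exact W_one_le p d 2 (by omega)
    · have hk := Skey p d m
      have hA : p * ∑ k ∈ Finset.range (m - d), W p d (k+1) ≤ W p d m := by
        rcases Nat.eq_zero_or_pos (m - d) with h0 | h0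
        · rw [h0]; simp
        · have hih := ih (m - d) (by omega)
          have hmo : W p d (m - d + 2) ≤ W p d m := W_mono p d (by omega)
          omega
      have hB := W_two_step p d m hp hd
      omega


/-- In a strictly increasing list of naturals all ≥ b, the k-th entry is ≥ b + k. -/
lemma getD_ge_of_sorted : ∀ (l : List ℕ), List.Pairwise (· < ·) l →
    ∀ b, (∀ y ∈ l, b ≤ y) → ∀ k, k < l.length → b + k ≤ l.getD k 0 := by
  intro l
  induction l with
  | nil => intro _ b _ k hk; simp at hk
  | cons a t ih =>
    intro h b hb k hk
    rcases List.pairwise_cons.mp h with ⟨ha, ht⟩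
    cases k with
    | zero => simpa using hb a (by simp)
    | succ k =>
      rw [List.getD_cons_succ]
      have h1 := ih ht (a+1) (fun y hy => ha y hy) k (by simpa using hk)
      have h2 : b ≤ a := hb a (by simp)
      omega

lemma delete_facts (w : ℕ → ℕ) (hw : Monotone w) (p : ℕ) (x : List ℕ)
    (hx : ∀ a ∈ x, a ≤ p) (D : Finset ℕ) :
    (deleteD x D).length ≤ x.length ∧
    x.length ≤ (deleteD x D).length + D.card ∧
    moment w (deleteD x D) ≤ moment w x ∧
    moment w x + p * ∑ k ∈ Finset.range (deleteD x D).length, w (k+1) ≤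
      moment w (deleteD x D) + p * ∑ i ∈ Finset.range x.length, w (i+1) := by
  classical
  set n := x.length with hn
  set g : ℕ → ℕ := fun i => x.getD i 0 with hg
  set L : List ℕ := (List.range n).filter (fun i => (i + 1) ∉ D) with hL
  have hdel : deleteD x D = L.map g := rfl
  set len := L.length with hlen
  have hlendel : (deleteD x D).length = len := by rw [hdel, List.length_map]
  set K : Finset ℕ := (Finset.range n).filter (fun i => (i + 1) ∉ D) with hK
  have hsort : List.Pairwise (· < ·) L := (List.pairwise_lt_range (n := n)).filter _
  have hmemL : ∀ i ∈ L, i < n ∧ (i + 1) ∉ D := by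
    intro i hi
    rw [hL, List.mem_filter, List.mem_range] at hi
    constructor
    · exact hi.1
    · simpa using hi.2
  have hk_le : ∀ k, k < len → k ≤ L.getD k 0 := by
    intro k hk
    simpa using getD_ge_of_sorted L hsort 0 (fun _ _ => Nat.zero_le _) k hk
  have hmemk : ∀ k, k < len → L.getD k 0 ∈ L := by
    intro k hk
    rw [List.getD_eq_getElem _ _ hk]
    exact List.getElem_mem hk
  -- transfer sums over positions to sums over kept indices
  have hbij : ∀ F : ℕ → ℕ,
      ∑ k ∈ Finset.range len, F (L.getD k 0) = ∑ i ∈ K, F i := by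
    intro F
    apply Finset.sum_bij (i := fun k _ => L.getD k 0)
    · intro k hk
      simp only [Finset.mem_range] at hk
      have := hmemL _ (hmemk k hk)
      rw [hK, Finset.mem_filter, Finset.mem_range]
      exact ⟨this.1, this.2⟩
    · intro k1 hk1 k2 hk2 heq
      simp only [Finset.mem_range] at hk1 hk2
      by_contra hne
      have hpg := List.pairwise_iff_getElem.mp hsort
      rcases Nat.lt_or_ge k1 k2 with h | h
      · have := hpg k1 k2 hk1 hk2 h
        rw [List.getD_eq_getElem _ _ hk1, List.getD_eq_getElem _ _ hk2] at heq
        omega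
      · have hlt : k2 < k1 := by omega
        have := hpg k2 k1 hk2 hk1 hlt
        rw [List.getD_eq_getElem _ _ hk1, List.getD_eq_getElem _ _ hk2] at heq
        omega
    · intro i hi
      rw [hK, Finset.mem_filter, Finset.mem_range] at hi
      have hiL : i ∈ L := by
        rw [hL, List.mem_filter, List.mem_range]
        exact ⟨hi.1, by simpa using hi.2⟩
      rcases List.mem_iff_getElem.mp hiL with ⟨k, hk, hki⟩
      refine ⟨k, Finset.mem_range.mpr hk, ?_⟩
      rw [List.getD_eq_getElem _ _ hk, hki]
    · intro k hk; rfl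
  -- length facts
  have hlen_card : len = K.card := by
    have := hbij (fun _ => 1)
    simpa using this
  have hlen_le : len ≤ n := by
    rw [hlen_card]
    calc K.card ≤ (Finset.range n).card := Finset.card_le_card (Finset.filter_subset _ _)
    _ = n := Finset.card_range n
  have hlen_ge : n ≤ len + D.card := by
    have hsplit := Finset.card_filter_add_card_filter_not
      (s := Finset.range n) (p := fun i => (i + 1) ∉ D)
    have hinj : ((Finset.range n).filter (fun i => ¬((i + 1) ∉ D))).card ≤ D.card := by
      apply Finset.card_le_card_of_injOn (fun i => i + 1)
      · intro i hi
        simp only [Finset.mem_coe, Finset.mem_filter, not_not] at hi ⊢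
        exact hi.2
      · intro i _ j _ hij
        simp only at hij
        omega
    rw [hlen_card]
    have : K.card + ((Finset.range n).filter (fun i => ¬((i + 1) ∉ D))).card = n := by
      rw [hK]
      simpa using hsplit
    omega
  have hgp : ∀ i, i < n → g i ≤ p := by
    intro i hi
    rw [hg]
    simp only
    rw [List.getD_eq_getElem _ _ (by omega : i < x.length)]
    exact hx _ (List.getElem_mem _)
  have hb_eq : moment w (deleteD x D) = ∑ k ∈ Finset.range len, w (k+1) * g (L.getD k 0) := by
    rw [moment, hdel, List.length_map]
    apply Finset.sum_congr rfl
    intro k hk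
    simp only [Finset.mem_range] at hk
    congr 1
    rw [List.getD_eq_getElem _ _ (by simpa using hk), List.getElem_map,
      ← List.getD_eq_getElem _ _ hk]
  have ha_def : moment w x = ∑ i ∈ Finset.range n, w (i+1) * g i := rfl
  set K' : Finset ℕ := (Finset.range n).filter (fun i => ¬((i + 1) ∉ D)) with hK'
  have hsplit2 : ∀ F : ℕ → ℕ,
      ∑ i ∈ Finset.range n, F i = ∑ i ∈ K, F i + ∑ i ∈ K', F i :=
    fun F => (Finset.sum_filter_add_sum_filter_not (Finset.range n) _ F).symm
  constructor
  · omega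
  constructor
  · omega
  constructor
  · calc moment w (deleteD x D)
        = ∑ k ∈ Finset.range len, w (k+1) * g (L.getD k 0) := hb_eq
      _ ≤ ∑ k ∈ Finset.range len, w (L.getD k 0 + 1) * g (L.getD k 0) := by
          apply Finset.sum_le_sum
          intro k hk
          simp only [Finset.mem_range] at hk
          exact Nat.mul_le_mul_right _ (hw (by have := hk_le k hk; omega))
      _ = ∑ i ∈ K, w (i+1) * g i := hbij (fun i => w (i+1) * g i)
      _ ≤ ∑ i ∈ Finset.range n, w (i+1) * g i :=
          Finset.sum_le_sum_of_subset (Finset.filter_subset _ _)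
      _ = moment w x := ha_def.symm
  · -- upper bound on the loss
    have hterm : ∀ k ∈ Finset.range len,
        w (L.getD k 0 + 1) * g (L.getD k 0) + p * w (k+1) ≤
        w (k+1) * g (L.getD k 0) + p * w (L.getD k 0 + 1) := by
      intro k hk
      simp only [Finset.mem_range] at hk
      have h1 : w (k+1) ≤ w (L.getD k 0 + 1) := hw (by have := hk_le k hk; omega)
      have h2 : g (L.getD k 0) ≤ p := hgp _ (hmemL _ (hmemk k hk)).1
      zify at h1 h2 ⊢
      nlinarith [mul_nonneg (sub_nonneg.mpr h1) (sub_nonneg.mpr h2)]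
    have hA := Finset.sum_le_sum hterm
    rw [Finset.sum_add_distrib, Finset.sum_add_distrib, ← Finset.mul_sum,
      ← Finset.mul_sum] at hA
    have hB : ∑ i ∈ K', w (i+1) * g i ≤ p * ∑ i ∈ K', w (i+1) := by
      rw [Finset.mul_sum]
      apply Finset.sum_le_sum
      intro i hi
      have hi' : i < n := by
        rw [hK'] at hi
        exact Finset.mem_range.mp (Finset.mem_of_mem_filter _ hi)
      calc w (i+1) * g i ≤ w (i+1) * p := Nat.mul_le_mul_left _ (hgp _ hi')
        _ = p * w (i+1) := Nat.mul_comm _ _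
    have ha_eq : moment w x
        = ∑ k ∈ Finset.range len, w (L.getD k 0 + 1) * g (L.getD k 0) +
          ∑ i ∈ K', w (i+1) * g i := by
      rw [ha_def, hsplit2 (fun i => w (i+1) * g i), hbij (fun i => w (i+1) * g i)]
    have hSn : ∑ i ∈ Finset.range n, w (i+1)
        = ∑ k ∈ Finset.range len, w (L.getD k 0 + 1) + ∑ i ∈ K', w (i+1) := by
      rw [hsplit2 (fun i => w (i+1)), hbij (fun i => w (i+1))]
    rw [ha_eq, hb_eq, hlendel, hSn, Nat.mul_add]
    linarith

theorem index_determined (q d n r c : ℕ) (hq : 2 ≤ q) (hd : 2 ≤ d)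
    (hr : r < W (q - 1) d (n + 1))
    (x : List ℕ) (hlen : x.length = n) (hx : ∀ a ∈ x, a < q)
    (hcode : moment (W (q - 1) d) x % W (q - 1) d (n + 1) = r)
    (D : Finset ℕ) (hD : D ⊆ Finset.Icc 1 n) (hcard : D.card = c) (hc : c ≤ d) :
    (r < moment (W (q - 1) d) (deleteD x D) →
      (moment (W (q - 1) d) x : ℤ) - (moment (W (q - 1) d) (deleteD x D) : ℤ) =
        (r : ℤ) + (W (q - 1) d (n + 1) : ℤ) - (moment (W (q - 1) d) (deleteD x D) : ℤ)) ∧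
    (moment (W (q - 1) d) (deleteD x D) ≤ r →
      (moment (W (q - 1) d) x : ℤ) - (moment (W (q - 1) d) (deleteD x D) : ℤ) =
        (r : ℤ) - (moment (W (q - 1) d) (deleteD x D) : ℤ)) := by
  subst hlen
  have hp : 1 ≤ q - 1 := by omega
  set w := W (q - 1) d with hwdef
  set n := x.length with hn
  obtain ⟨hl1, hl2, hba, hub⟩ :=
    delete_facts w (W_mono (q - 1) d) (q - 1) x (fun a ha => by have := hx a ha; omega) D
  set len := (deleteD x D).length with hlendef
  set a := moment w x with hadef
  set b := moment w (deleteD x D) with hbdef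
  set m := w (n + 1) with hmdef
  -- the loss a - b is less than m
  have hlen_d : n - len ≤ d := by omega
  have hS : ∑ i ∈ Finset.range n, w (i+1)
      = ∑ k ∈ Finset.range len, w (k+1) + ∑ k ∈ Finset.Ico len n, w (k+1) := by
    have h := Finset.sum_Ico_consecutive (fun k => w (k+1)) (Nat.zero_le len) hl1
    simp only [← Finset.range_eq_Ico] at h
    exact h.symm
  have hT : ∑ k ∈ Finset.Ico len n, w (k+1) = ∑ j ∈ Finset.range (n - len), w (n - j) :=
    sum_Ico_rev w len n hl1
  have hT2 : ∑ j ∈ Finset.range (n - len), w (n - j) ≤ ∑ j ∈ Finset.range d, w (n - j) :=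
    Finset.sum_le_sum_of_subset (Finset.range_subset_range.2 hlen_d)
  have hW : m = 1 + (q - 1) * ∑ j ∈ Finset.range d, w (n - j) := W_succ (q - 1) d n
  have hclose : a < b + m := by
    rw [hS, Nat.mul_add] at hub
    have h1 : (q - 1) * ∑ k ∈ Finset.Ico len n, w (k+1)
        ≤ (q - 1) * ∑ j ∈ Finset.range d, w (n - j) :=
      Nat.mul_le_mul_left _ (le_trans (le_of_eq hT) hT2)
    linarith
  -- a < 2 * m
  have hap : a ≤ (q - 1) * ∑ i ∈ Finset.range n, w (i+1) := by
    rw [hadef, moment, Finset.mul_sum]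
    apply Finset.sum_le_sum
    intro i hi
    simp only [Finset.mem_range] at hi
    have : x.getD i 0 ≤ q - 1 := by
      rw [List.getD_eq_getElem _ _ (by omega : i < x.length)]
      have := hx _ (List.getElem_mem (by omega : i < x.length))
      omega
    calc w (i+1) * x.getD i 0 ≤ w (i+1) * (q - 1) := Nat.mul_le_mul_left _ this
      _ = (q - 1) * w (i+1) := Nat.mul_comm _ _
  have hm1 : 1 ≤ m := W_one_le (q - 1) d (n + 1) (by omega)
  have hkey := Skey (q - 1) d n
  have hlow : (q - 1) * ∑ k ∈ Finset.range (n - d), w (k+1) < m := by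
    rcases Nat.eq_zero_or_pos n with h0 | h0
    · rw [h0]
      simp only [Nat.zero_sub, Finset.range_zero, Finset.sum_empty, Nat.mul_zero]
      omega
    · have h1 := pS_lt (q - 1) d hp hd (n - d)
      have h2 : W (q - 1) d (n - d + 2) ≤ W (q - 1) d (n + 1) := W_mono (q - 1) d (by omega)
      rw [hmdef, hwdef]
      omega
  have ha2m : a < 2 * m := by linarith
  -- conclude
  have hdm := Nat.div_add_mod a m
  rw [hcode] at hdm
  have hdiv : a / m < 2 := by
    by_contra h
    push_neg at h
    have h2 : m * 2 ≤ m * (a / m) := Nat.mul_le_mul_left m h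
    linarith
  have haor : a = r ∨ a = m + r := by
    rcases Nat.le_one_iff_eq_zero_or_eq_one.mp (Nat.lt_succ_iff.mp hdiv) with h | h <;> rw [h] at hdm
    · left; omega
    · right; omega
  constructor
  · intro hrb
    have hval : a = m + r := by
      rcases haor with h | h
      · omega
      · exact h
    rw [hval]
    push_cast
    ring
  · intro hbr
    have hval : a = r := by
      rcases haor with h | h
      · exact h
      · omega
    rw [hval]
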